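/- Let $F$ be a non-archimedean local field with normalized absolute value $|\cdot|_F$. For every $g \in \mathrm{GL}_r(F)$ and every non-archimedean norm $\nu$ on $F^r$, the lattice discriminant satisfies $D(g*\nu) = |\det g|_F \cdot D(\nu)$, where $(g*\nu)(x) := \nu(xg)$ for row vectors $x \in F^r$. -/
import Mathlib


/-- An abstract (non-archimedean, multiplicative) absolute value on a field `F`. -/
structure NAAbs (F : Type*) [Field F] where
  abs : F → ℝ
  nonneg : ∀ a, 0 ≤ abs a
  eq_zero : ∀ a, abs a = 0 ↔ a = 0
  map_mul : ∀ a b, abs (a * b) = abs a * abs b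
  ultra : ∀ a b, abs (a + b) ≤ max (abs a) (abs b)

/-- `F` together with `A` is a non-archimedean *local* field with uniformizer `π`:
the value group is discrete with generator `|π| < 1`, the residue field is finite,
and `F` is complete. -/
def NAAbs.IsLocal {F : Type*} [Field F] (A : NAAbs F) (π : F) : Prop :=
  π ≠ 0 ∧ A.abs π < 1 ∧ (∀ a : F, A.abs a < 1 → A.abs a ≤ A.abs π) ∧
  (∃ S : Finset F, ∀ a : F, A.abs a ≤ 1 → ∃ s ∈ S, A.abs (a - s) < 1) ∧
  (∀ f : ℕ → F, (∀ ε : ℝ, 0 < ε → ∃ N, ∀ m ≥ N, ∀ n ≥ N, A.abs (f m - f n) < ε) →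
    ∃ x : F, ∀ ε : ℝ, 0 < ε → ∃ N, ∀ n ≥ N, A.abs (f n - x) < ε)

/-- A non-archimedean norm on an `F`-vector space `V`, relative to the absolute value `A`. -/
structure NANorm {F : Type*} [Field F] (A : NAAbs F)
    (V : Type*) [AddCommGroup V] [Module F V] where
  nu : V → ℝ
  nonneg : ∀ v, 0 ≤ nu v
  eq_zero : ∀ v, nu v = 0 ↔ v = 0
  smul_eq : ∀ (a : F) (v : V), nu (a • v) = A.abs a * nu v
  ultra : ∀ u v, nu (u + v) ≤ max (nu u) (nu v)

/-- `b` is an `O_F`-basis of the `O_F`-lattice `L ⊆ V`. -/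
def IsLatticeBasis {F : Type*} [Field F] (A : NAAbs F)
    {V : Type*} [AddCommGroup V] [Module F V]
    {ι : Type*} [Fintype ι] (b : ι → V) (L : Set V) : Prop :=
  LinearIndependent F b ∧
  ∀ v : V, v ∈ L ↔ ∃ c : ι → F, (∀ i, A.abs (c i) ≤ 1) ∧ v = ∑ i, c i • b i

/-- `b` is orthogonal with respect to the norm(-like function) `νn`. -/
def IsOrthogonalFor {F : Type*} [Field F] (A : NAAbs F)
    {V : Type*} [AddCommGroup V] [Module F V]
    {ι : Type*} [Fintype ι] (νn : V → ℝ) (b : ι → V) : Prop :=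
  ∀ c : ι → F, νn (∑ i, c i • b i) = ⨆ i, νn (c i • b i)

section Aux

variable {F : Type*} [Field F] (A : NAAbs F)

lemma NAAbs.abs_zero : A.abs 0 = 0 := (A.eq_zero 0).mpr rfl

lemma NAAbs.abs_one : A.abs 1 = 1 := by
  have h := A.map_mul 1 1
  rw [one_mul] at h
  have h1 : A.abs 1 ≠ 0 := fun h0 => one_ne_zero ((A.eq_zero 1).mp h0)
  exact (mul_left_cancel₀ h1 (by rw [mul_one, ← h])).symm

lemma NAAbs.abs_neg_one : A.abs (-1) = 1 := by
  have h := A.map_mul (-1) (-1)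
  rw [neg_mul_neg, one_mul, A.abs_one] at h
  rcases mul_self_eq_one_iff.mp h.symm with h1 | h1
  · exact h1
  · nlinarith [A.nonneg (-1)]

lemma NAAbs.abs_prod {ι : Type*} (s : Finset ι) (f : ι → F) :
    A.abs (∏ i ∈ s, f i) = ∏ i ∈ s, A.abs (f i) := by
  induction s using Finset.cons_induction with
  | empty => simp [A.abs_one]
  | cons a s ha ih => rw [Finset.prod_cons, Finset.prod_cons, A.map_mul, ih]

lemma NAAbs.abs_sum_le {ι : Type*} (s : Finset ι) (f : ι → F) {B : ℝ} (hB : 0 ≤ B)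
    (h : ∀ i ∈ s, A.abs (f i) ≤ B) : A.abs (∑ i ∈ s, f i) ≤ B := by
  induction s using Finset.cons_induction with
  | empty => simpa [A.abs_zero] using hB
  | cons a s ha ih =>
    rw [Finset.sum_cons]
    exact le_trans (A.ultra _ _)
      (max_le (h a (Finset.mem_cons_self a s)) (ih fun i hi => h i (Finset.mem_cons_of_mem hi)))

lemma NAAbs.abs_neg (a : F) : A.abs (-a) = A.abs a := by
  rw [← neg_one_mul, A.map_mul, A.abs_neg_one, one_mul]

lemma NAAbs.abs_sign_smul {r : ℕ} (σ : Equiv.Perm (Fin r)) (x : F) :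
    A.abs (Equiv.Perm.sign σ • x) = A.abs x := by
  rcases Int.units_eq_one_or (Equiv.Perm.sign σ) with h1 | h1 <;>
    simp [h1, Units.smul_def, zsmul_eq_mul, A.map_mul, A.abs_one, A.abs_neg_one, A.abs_neg]

lemma NAAbs.abs_det_le_one {r : ℕ} (M : Matrix (Fin r) (Fin r) F)
    (h : ∀ i j, A.abs (M i j) ≤ 1) : A.abs M.det ≤ 1 := by
  rw [Matrix.det_apply]
  apply A.abs_sum_le _ _ zero_le_one
  intro σ _
  rw [A.abs_sign_smul, A.abs_prod]
  exact Finset.prod_le_one (fun i _ => A.nonneg _) (fun i _ => h _ _)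

/-- Ultrametric Hadamard-type inequality for an orthogonal family. -/
lemma lemA {F : Type*} [Field F] (A : NAAbs F) {r : ℕ}
    (νn : (Fin r → F) → ℝ) (hnn : ∀ v, 0 ≤ νn v)
    (hsm : ∀ (a : F) (v : Fin r → F), νn (a • v) = A.abs a * νn v)
    (v : Fin r → (Fin r → F)) (hv : IsOrthogonalFor A νn v)
    (c : Matrix (Fin r) (Fin r) F) :
    A.abs c.det * ∏ j, νn (v j) ≤ ∏ i, νn (∑ j, c i j • v j) := by
  by_cases hz : ∃ j, νn (v j) = 0
  · obtain ⟨j, hj⟩ := hz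
    rw [Finset.prod_eq_zero (Finset.mem_univ j) hj, mul_zero]
    exact Finset.prod_nonneg fun i _ => hnn _
  push_neg at hz
  have hP : 0 < ∏ j, νn (v j) :=
    Finset.prod_pos fun j _ => lt_of_le_of_ne (hnn _) (Ne.symm (hz j))
  rw [← le_div_iff₀ hP, Matrix.det_apply]
  have hR : 0 ≤ (∏ i, νn (∑ j, c i j • v j)) / ∏ j, νn (v j) :=
    div_nonneg (Finset.prod_nonneg fun i _ => hnn _) hP.le
  apply A.abs_sum_le _ _ hR
  intro σ _
  rw [A.abs_sign_smul, A.abs_prod, le_div_iff₀ hP, ← Finset.prod_mul_distrib]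
  calc ∏ i, A.abs (c (σ i) i) * νn (v i)
      ≤ ∏ i, νn (∑ j, c (σ i) j • v j) := by
        apply Finset.prod_le_prod (fun i _ => mul_nonneg (A.nonneg _) (hnn _))
        intro i _
        rw [hv (fun j => c (σ i) j)]
        have h1 := le_ciSup (f := fun j => νn (c (σ i) j • v j))
          (Set.Finite.bddAbove (Set.finite_range _)) i
        rwa [hsm] at h1
    _ = ∏ i, νn (∑ j, c i j • v j) := Equiv.prod_comp σ (fun i => νn (∑ j, c i j • v j))

/-- The matrix whose rows form an `O_F`-basis of the standard lattice has `|det| = 1`. -/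
lemma rows_det_abs_one {F : Type*} [Field F] (A : NAAbs F) {r : ℕ}
    (u : Fin r → (Fin r → F))
    (hu : IsLatticeBasis A u {x : Fin r → F | ∀ i, A.abs (x i) ≤ 1}) :
    A.abs (Matrix.of u).det = 1 := by
  classical
  have hentry : ∀ j i, A.abs (u j i) ≤ 1 := by
    intro j
    have hmem : u j ∈ {x : Fin r → F | ∀ i, A.abs (x i) ≤ 1} := by
      rw [hu.2]
      refine ⟨fun i => if i = j then 1 else 0, ?_, ?_⟩
      · intro i; by_cases h : i = j <;> simp [h, A.abs_one, A.abs_zero]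
      · simp [ite_smul]
    exact hmem
  have hCex : ∀ k : Fin r, ∃ c : Fin r → F,
      (∀ i, A.abs (c i) ≤ 1) ∧ (fun i => if i = k then (1:F) else 0) = ∑ i, c i • u i := by
    intro k
    have : (fun i => if i = k then (1:F) else 0) ∈ {x : Fin r → F | ∀ i, A.abs (x i) ≤ 1} := by
      intro i; by_cases h : i = k <;> simp [h, A.abs_one, A.abs_zero]
    exact (hu.2 _).mp this
  choose C hC1 hC2 using hCex
  have hCU : (Matrix.of C) * (Matrix.of u) = 1 := by
    ext k j
    have h2 := congrFun (hC2 k) j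
    simp only [Finset.sum_apply, Pi.smul_apply, smul_eq_mul] at h2
    rw [Matrix.mul_apply]
    simp only [Matrix.of_apply, ← h2, Matrix.one_apply]
    by_cases h : k = j <;> simp [h, eq_comm]
  have h1 : A.abs (Matrix.of C).det * A.abs (Matrix.of u).det = 1 := by
    rw [← A.map_mul, ← Matrix.det_mul, hCU, Matrix.det_one, A.abs_one]
  have hUle := A.abs_det_le_one (Matrix.of u) (fun i j => hentry i j)
  have hCle := A.abs_det_le_one (Matrix.of C) (fun i j => hC1 i j)
  nlinarith [A.nonneg (Matrix.of u).det, A.nonneg (Matrix.of C).det]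

lemma vecMul_row {F : Type*} [Field F] {r : ℕ} (B g : Matrix (Fin r) (Fin r) F) (i : Fin r) :
    Matrix.vecMul (B i) g = (B * g) i := by
  funext k
  simp [Matrix.vecMul, Matrix.mul_apply, dotProduct]

end Aux

/-- The lattice discriminant `D(ν) = D_ν(O_F^r)` transforms by
`D(g*ν) = |det g|_F · D(ν)` under the action `(g*ν)(x) = ν(xg)` of `GL_r(F)`. -/
theorem statement3 {F : Type*} [Field F] (A : NAAbs F) (π : F) (hloc : A.IsLocal π)
    (r : ℕ) (ν : NANorm A (Fin r → F))
    (g : Matrix (Fin r) (Fin r) F) (hg : IsUnit g.det)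
    (u u' : Fin r → (Fin r → F))
    (hu : IsLatticeBasis A u {x : Fin r → F | ∀ i, A.abs (x i) ≤ 1})
    (huo : IsOrthogonalFor A ν.nu u)
    (hu' : IsLatticeBasis A u' {x : Fin r → F | ∀ i, A.abs (x i) ≤ 1})
    (hu'o : IsOrthogonalFor A (fun x => ν.nu (Matrix.vecMul x g)) u') :
    ∏ i, ν.nu (Matrix.vecMul (u' i) g) = A.abs g.det * ∏ i, ν.nu (u i) := by
  classical
  have hU1 := rows_det_abs_one A u hu
  have hU'1 := rows_det_abs_one A u' hu'
  set U : Matrix (Fin r) (Fin r) F := Matrix.of u with hUdef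
  set U' : Matrix (Fin r) (Fin r) F := Matrix.of u' with hU'def
  have hUunit : IsUnit U.det := by
    rw [isUnit_iff_ne_zero]
    intro h
    rw [h, A.abs_zero] at hU1
    exact zero_ne_one hU1
  have hU'g : IsUnit (U' * g).det := by
    rw [Matrix.det_mul]
    apply IsUnit.mul _ hg
    rw [isUnit_iff_ne_zero]
    intro h
    rw [h, A.abs_zero] at hU'1
    exact zero_ne_one hU'1
  set M : Matrix (Fin r) (Fin r) F := U' * g * U⁻¹ with hMdef
  set P : Matrix (Fin r) (Fin r) F := U * (U' * g)⁻¹ with hPdef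
  have hMU : M * U = U' * g := Matrix.nonsing_inv_mul_cancel_right U (U' * g) hUunit
  have hPU : P * (U' * g) = U := Matrix.nonsing_inv_mul_cancel_right (U' * g) U hU'g
  -- first direction: rows of U' * g in terms of the orthogonal basis u
  have hrowM : ∀ i, Matrix.vecMul (u' i) g = ∑ j, M i j • u j := by
    intro i
    have h1 : Matrix.vecMul (u' i) g = (U' * g) i := vecMul_row U' g i
    rw [h1, ← hMU]
    funext k
    simp only [Matrix.mul_apply, Finset.sum_apply, Pi.smul_apply, smul_eq_mul]
    rfl
  have hdetM : A.abs M.det = A.abs g.det := by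
    have h : M.det * U.det = U'.det * g.det := by
      rw [← Matrix.det_mul, hMU, Matrix.det_mul]
    have h2 := congrArg A.abs h
    rw [A.map_mul, A.map_mul, hU1, hU'1, mul_one, one_mul] at h2
    exact h2
  have hle1 : A.abs g.det * ∏ i, ν.nu (u i) ≤ ∏ i, ν.nu (Matrix.vecMul (u' i) g) := by
    have h := lemA A ν.nu ν.nonneg ν.smul_eq u huo M
    rw [hdetM] at h
    calc A.abs g.det * ∏ i, ν.nu (u i) ≤ ∏ i, ν.nu (∑ j, M i j • u j) := h
      _ = ∏ i, ν.nu (Matrix.vecMul (u' i) g) :=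
        Finset.prod_congr rfl fun i _ => by rw [hrowM i]
  -- second direction: use the norm g*ν and the orthogonal basis u'
  have hsm2 : ∀ (a : F) (x : Fin r → F),
      ν.nu (Matrix.vecMul (a • x) g) = A.abs a * ν.nu (Matrix.vecMul x g) := by
    intro a x
    rw [Matrix.smul_vecMul, ν.smul_eq]
  have hrowP : ∀ i, Matrix.vecMul (∑ j, P i j • u' j) g = u i := by
    intro i
    have hs : (∑ j, P i j • u' j) = (P * U') i := by
      funext k
      simp only [Matrix.mul_apply, Finset.sum_apply, Pi.smul_apply, smul_eq_mul]
      rfl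
    rw [hs, vecMul_row (P * U') g i, Matrix.mul_assoc, hPU]
    rfl
  have hdetP : A.abs P.det * A.abs g.det = 1 := by
    have h : P.det * (U'.det * g.det) = U.det := by
      rw [← Matrix.det_mul U' g, ← Matrix.det_mul, hPU]
    have h2 := congrArg A.abs h
    rw [A.map_mul, A.map_mul, hU1, hU'1, one_mul] at h2
    rw [h2]
  have hgpos : 0 < A.abs g.det := by
    rcases lt_or_eq_of_le (A.nonneg g.det) with h | h
    · exact h
    · exfalso
      rw [← h] at hdetP
      simp at hdetP
  have hle2 : ∏ i, ν.nu (Matrix.vecMul (u' i) g) ≤ A.abs g.det * ∏ i, ν.nu (u i) := by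
    have h := lemA A (fun x => ν.nu (Matrix.vecMul x g)) (fun x => ν.nonneg _) hsm2 u' hu'o P
    have h2 : ∏ i, (fun x => ν.nu (Matrix.vecMul x g)) (∑ j, P i j • u' j) = ∏ i, ν.nu (u i) :=
      Finset.prod_congr rfl fun i _ => by simp only []; rw [hrowP i]
    rw [h2] at h
    have h3 := mul_le_mul_of_nonneg_left h (A.nonneg g.det)
    rw [← mul_assoc, mul_comm (A.abs g.det) (A.abs P.det), hdetP, one_mul] at h3
    exact h3
  exact le_antisymm hle2 hle1
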